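/- Let M₁, M₂ be positive semidefinite n×n complex matrices satisfying the completeness relation M₁†M₁ + M₂†M₂ = I. Then there exists a Hermitian matrix X such that M₁ = cos(X) and M₂ = sin(X). -/

import Mathlib

open Matrix
open scoped ComplexOrder

section Aux
variable {n : ℕ}

/-- exp of a unitary conjugation of a diagonal matrix. -/
lemma exp_unitary_conj_diagonal (U : Matrix (Fin n) (Fin n) ℂ)
    (hsU : star U * U = 1) (hUs : U * star U = 1) (f : Fin n → ℂ) :
    NormedSpace.exp (U * diagonal f * star U)
      = U * diagonal (fun i => Complex.exp (f i)) * star U := by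
  have hUunit : IsUnit U := ⟨⟨U, star U, hUs, hsU⟩, rfl⟩
  have hUinv : U⁻¹ = star U := Matrix.inv_eq_left_inv hsU
  have h1 := Matrix.exp_conj U (diagonal f) hUunit
  rw [hUinv] at h1
  rw [h1, Matrix.exp_diagonal]
  congr 2
  funext i
  rw [Pi.exp_def, ← Complex.exp_eq_exp_ℂ]

lemma smul_conj_diagonal (c : ℂ) (U : Matrix (Fin n) (Fin n) ℂ) (f : Fin n → ℂ) :
    c • (U * diagonal f * star U) = U * diagonal (fun i => c * f i) * star U := by
  have : c • diagonal f = diagonal (fun i => c * f i) := by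
    rw [← Matrix.diagonal_smul]; rfl
  simp only [← this, mul_smul_comm, smul_mul_assoc]

end Aux

/-- Matrix cosine via the exponential: `cos X = (exp(iX) + exp(-iX))/2`. -/
noncomputable def matCos {n : ℕ} (X : Matrix (Fin n) (Fin n) ℂ) : Matrix (Fin n) (Fin n) ℂ :=
  ((2 : ℂ)⁻¹) • (NormedSpace.exp (Complex.I • X) + NormedSpace.exp (-(Complex.I • X)))

/-- Matrix sine via the exponential: `sin X = (exp(iX) - exp(-iX))/(2i)`. -/
noncomputable def matSin {n : ℕ} (X : Matrix (Fin n) (Fin n) ℂ) : Matrix (Fin n) (Fin n) ℂ :=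
  ((2 * Complex.I : ℂ)⁻¹) • (NormedSpace.exp (Complex.I • X) - NormedSpace.exp (-(Complex.I • X)))

lemma matCos_conj_diagonal {n : ℕ} (U : Matrix (Fin n) (Fin n) ℂ)
    (hsU : star U * U = 1) (hUs : U * star U = 1) (d : Fin n → ℝ) :
    matCos (U * diagonal (fun i => (d i : ℂ)) * star U)
      = U * diagonal (fun i => (Real.cos (d i) : ℂ)) * star U := by
  have h1 : Complex.I • (U * diagonal (fun i => (d i : ℂ)) * star U)
      = U * diagonal (fun i => Complex.I * (d i : ℂ)) * star U := smul_conj_diagonal _ _ _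
  have h2 : -(Complex.I • (U * diagonal (fun i => (d i : ℂ)) * star U))
      = U * diagonal (fun i => -(Complex.I * (d i : ℂ))) * star U := by
    rw [← neg_one_smul ℂ (Complex.I • _), smul_smul, smul_conj_diagonal]
    simp
  rw [matCos, h2, h1, exp_unitary_conj_diagonal U hsU hUs, exp_unitary_conj_diagonal U hsU hUs,
    ← Matrix.add_mul, ← Matrix.mul_add, Matrix.diagonal_add, smul_conj_diagonal]
  refine congrArg (· * star U) (congrArg (U * ·) (congrArg diagonal (funext fun i => ?_)))
  rw [Complex.ofReal_cos, Complex.cos]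
  ring_nf

lemma matSin_conj_diagonal {n : ℕ} (U : Matrix (Fin n) (Fin n) ℂ)
    (hsU : star U * U = 1) (hUs : U * star U = 1) (d : Fin n → ℝ) :
    matSin (U * diagonal (fun i => (d i : ℂ)) * star U)
      = U * diagonal (fun i => (Real.sin (d i) : ℂ)) * star U := by
  have h1 : Complex.I • (U * diagonal (fun i => (d i : ℂ)) * star U)
      = U * diagonal (fun i => Complex.I * (d i : ℂ)) * star U := smul_conj_diagonal _ _ _
  have h2 : -(Complex.I • (U * diagonal (fun i => (d i : ℂ)) * star U))
      = U * diagonal (fun i => -(Complex.I * (d i : ℂ))) * star U := by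
    rw [← neg_one_smul ℂ (Complex.I • _), smul_smul, smul_conj_diagonal]
    simp
  rw [matSin, h2, h1, exp_unitary_conj_diagonal U hsU hUs, exp_unitary_conj_diagonal U hsU hUs,
    ← Matrix.sub_mul, ← Matrix.mul_sub, Matrix.diagonal_sub, smul_conj_diagonal]
  refine congrArg (· * star U) (congrArg (U * ·) (congrArg diagonal (funext fun i => ?_)))
  rw [Complex.ofReal_sin, Complex.sin]
  have : (Complex.I : ℂ) ≠ 0 := Complex.I_ne_zero
  field_simp
  ring_nf
  rw [Complex.I_sq]
  ring

open scoped MatrixOrder in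
lemma psd_eq_of_sq_eq_sq {n : ℕ} {A B : Matrix (Fin n) (Fin n) ℂ} (hA : A.PosSemidef)
    (hB : B.PosSemidef) (h : A ^ 2 = B ^ 2) : A = B :=
  (CFC.sq_eq_sq_iff A B (Matrix.nonneg_iff_posSemidef.mpr hA)
    (Matrix.nonneg_iff_posSemidef.mpr hB)).mp h

theorem stmt_0 {n : ℕ} (M₁ M₂ : Matrix (Fin n) (Fin n) ℂ)
    (hM₁ : M₁.PosSemidef) (hM₂ : M₂.PosSemidef)
    (hcomp : M₁ᴴ * M₁ + M₂ᴴ * M₂ = 1) :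
    ∃ X : Matrix (Fin n) (Fin n) ℂ, X.IsHermitian ∧ M₁ = matCos X ∧ M₂ = matSin X := by
  classical
  have hH : M₂.IsHermitian := hM₂.1
  set U : Matrix (Fin n) (Fin n) ℂ := (hH.eigenvectorUnitary : Matrix (Fin n) (Fin n) ℂ) with hUdef
  have hsU : star U * U = 1 := Matrix.mem_unitaryGroup_iff'.mp hH.eigenvectorUnitary.2
  have hUs : U * star U = 1 := Matrix.mem_unitaryGroup_iff.mp hH.eigenvectorUnitary.2
  set ev : Fin n → ℝ := hH.eigenvalues with hev
  have hspec : M₂ = U * diagonal (fun i => ((ev i : ℝ) : ℂ)) * star U := hH.spectral_theorem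
  have hdiag : diagonal (fun i => ((ev i : ℝ) : ℂ)) = star U * M₂ * U :=
    by
      rw [hspec]
      simp only [Matrix.mul_assoc, hsU, Matrix.mul_one]
      rw [← Matrix.mul_assoc, hsU, Matrix.one_mul]
  have h0 : ∀ i, 0 ≤ ev i := fun i => hM₂.eigenvalues_nonneg i
  have hM2sq : M₂ * M₂ = 1 - M₁ᴴ * M₁ := by
    calc M₂ * M₂ = M₂ᴴ * M₂ := by rw [hH.eq]
    _ = 1 - M₁ᴴ * M₁ := eq_sub_of_add_eq' hcomp
  have hM2sq' : M₂ * M₂ = U * diagonal (fun i => ((ev i : ℂ))^2) * star U := by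
    conv_lhs => rw [hspec]
    rw [show (U * diagonal (fun i => ((ev i : ℝ) : ℂ)) * star U) *
          (U * diagonal (fun i => ((ev i : ℝ) : ℂ)) * star U)
        = U * (diagonal (fun i => ((ev i : ℝ) : ℂ)) * (star U * U) *
            diagonal (fun i => ((ev i : ℝ) : ℂ))) * star U by
      simp only [Matrix.mul_assoc]]
    rw [hsU, Matrix.mul_one, Matrix.diagonal_mul_diagonal]
    congr 2
    funext i
    ring
  have h1le : ∀ i, ev i ≤ 1 := by
    intro i
    have hP : ((M₁ * U)ᴴ * (M₁ * U)).PosSemidef := Matrix.posSemidef_conjTranspose_mul_self _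
    have hPi : 0 ≤ ((M₁ * U)ᴴ * (M₁ * U)) i i := by
      rw [Matrix.mul_apply]
      refine Finset.sum_nonneg fun k _ => ?_
      rw [Matrix.conjTranspose_apply]
      exact star_mul_self_nonneg _
    have hdsq : diagonal (fun i => ((ev i : ℂ))^2) = 1 - (M₁ * U)ᴴ * (M₁ * U) := by
      have h1 : star U * (M₂ * M₂) * U = diagonal (fun i => ((ev i : ℂ))^2) := by
        rw [hM2sq']
        rw [show star U * (U * diagonal (fun i => ((ev i : ℂ))^2) * star U) * U
            = (star U * U) * diagonal (fun i => ((ev i : ℂ))^2) * (star U * U) by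
          simp only [Matrix.mul_assoc]]
        rw [hsU, Matrix.one_mul, Matrix.mul_one]
      rw [← h1, hM2sq]
      rw [Matrix.mul_sub, Matrix.sub_mul, Matrix.mul_one, hsU]
      congr 1
      rw [Matrix.conjTranspose_mul, ← Matrix.star_eq_conjTranspose U]
      simp only [Matrix.mul_assoc]
    have hentry := congrFun (congrFun hdsq i) i
    rw [Matrix.diagonal_apply_eq, Matrix.sub_apply, Matrix.one_apply_eq] at hentry
    have hPi' : ((M₁ * U)ᴴ * (M₁ * U)) i i = ((1 - ev i ^ 2 : ℝ) : ℂ) := by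
      push_cast
      linear_combination hentry
    rw [hPi'] at hPi
    have : (0 : ℝ) ≤ 1 - ev i ^ 2 := Complex.zero_le_real.mp hPi
    nlinarith [h0 i]
  -- the candidate X
  set x : Fin n → ℝ := fun i => Real.arcsin (ev i) with hx
  refine ⟨U * diagonal (fun i => ((x i : ℝ) : ℂ)) * star U, ?_, ?_, ?_⟩
  · have hds : (diagonal fun i => ((x i : ℝ) : ℂ))ᴴ = diagonal fun i => ((x i : ℝ) : ℂ) := by
      have hv : (star fun i => ((x i : ℝ) : ℂ)) = fun i => ((x i : ℝ) : ℂ) := by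
        funext i
        exact Complex.conj_ofReal (x i)
      rw [Matrix.diagonal_conjTranspose, hv]
    show (U * diagonal (fun i => ((x i : ℝ) : ℂ)) * star U)ᴴ = _
    rw [Matrix.conjTranspose_mul, Matrix.conjTranspose_mul, hds,
      show (star U)ᴴ = U by rw [Matrix.star_eq_conjTranspose, Matrix.conjTranspose_conjTranspose],
      show Uᴴ = star U from (Matrix.star_eq_conjTranspose U).symm, Matrix.mul_assoc]
  · rw [matCos_conj_diagonal U hsU hUs]
    refine psd_eq_of_sq_eq_sq hM₁ ?_ ?_
    · have hd : (0 : Fin n → ℂ) ≤ fun i => ((Real.cos (x i) : ℝ) : ℂ) := by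
        intro i
        simp only [Pi.zero_apply]
        refine Complex.zero_le_real.mpr ?_
        rw [hx, Real.cos_arcsin]
        exact Real.sqrt_nonneg _
      have := (Matrix.PosSemidef.diagonal hd).mul_mul_conjTranspose_same U
      rwa [← Matrix.star_eq_conjTranspose U] at this
    · have hlhs : M₁ ^ 2 = 1 - M₂ * M₂ := by
        calc M₁ ^ 2 = M₁ᴴ * M₁ := by rw [hM₁.1.eq, pow_two]
        _ = 1 - M₂ᴴ * M₂ := eq_sub_of_add_eq hcomp
        _ = 1 - M₂ * M₂ := by rw [hH.eq]
      have hcossq : ∀ i, (Real.cos (x i) : ℝ) ^ 2 = 1 - ev i ^ 2 := by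
        intro i
        rw [hx, Real.cos_arcsin, Real.sq_sqrt]
        nlinarith [h0 i, h1le i]
      have hrhs : (U * diagonal (fun i => ((Real.cos (x i) : ℝ) : ℂ)) * star U) ^ 2
          = 1 - M₂ * M₂ := by
        rw [pow_two]
        rw [show (U * diagonal (fun i => ((Real.cos (x i) : ℝ) : ℂ)) * star U) *
              (U * diagonal (fun i => ((Real.cos (x i) : ℝ) : ℂ)) * star U)
            = U * (diagonal (fun i => ((Real.cos (x i) : ℝ) : ℂ)) * (star U * U) *
                diagonal (fun i => ((Real.cos (x i) : ℝ) : ℂ))) * star U by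
          simp only [Matrix.mul_assoc]]
        rw [hsU, Matrix.mul_one, Matrix.diagonal_mul_diagonal, hM2sq']
        have : (fun i => ((Real.cos (x i) : ℝ) : ℂ) * ((Real.cos (x i) : ℝ) : ℂ))
            = fun i => 1 - ((ev i : ℂ))^2 := by
          funext i
          rw [← Complex.ofReal_mul, ← pow_two, hcossq i]
          push_cast
          ring
        rw [this, ← Matrix.diagonal_sub]
        simp [Matrix.mul_sub, Matrix.sub_mul, hUs, Matrix.mul_assoc]
      rw [hlhs, hrhs]
  · rw [matSin_conj_diagonal U hsU hUs]
    have : (fun i => ((Real.sin (x i) : ℝ) : ℂ)) = fun i => ((ev i : ℝ) : ℂ) := by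
      funext i
      rw [hx, Real.sin_arcsin (by linarith [h0 i]) (h1le i)]
    rw [this]
    exact hspec
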